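/- Let P₀, P₁ be probability measures on a common space with total variation distance TV(P₀, P₁), and let E be an event with P₀(E) ≥ p. Then the common part P₀ ∧ P₁ (the measure with density min{p₀, p₁} w.r.t. a dominating measure) satisfies (P₀ ∧ P₁)(E) ≥ p − TV(P₀, P₁). Moreover, for any measurable function ψ̂ and measurable targets T₀, T₁, max_{j∈{0,1}} E_{P_j}|ψ̂ − T_j| ≥ (1/2)∫ |T₁ − T₀| d(P₀ ∧ P₁). -/

import Mathlib

open MeasureTheory ENNReal

/-- **Le Cam two-point scheme.** Let `P₀ = ν.withDensity p₀`, `P₁ = ν.withDensity p₁` be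
probability measures with densities w.r.t. a dominating measure `ν`, and let
`M = ν.withDensity (min p₀ p₁)` be their common part,
`TV(P₀,P₁) = (1/2)∫|p₀ − p₁| dν`. Then:
(a) for any event `E` with `P₀(E) ≥ p`, `M(E) ≥ p − TV(P₀,P₁)`; and
(b) for any measurable `ψ̂` and targets `T₀, T₁`,
`max_j ∫|ψ̂ − T_j| dP_j ≥ (1/2)∫|T₁ − T₀| dM`. -/
theorem stmt19 {α : Type*} [MeasurableSpace α] (ν : Measure α) [SigmaFinite ν]
    (p₀ p₁ : α → ℝ) (hp₀m : Measurable p₀) (hp₁m : Measurable p₁)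
    (hp₀0 : ∀ x, 0 ≤ p₀ x) (hp₁0 : ∀ x, 0 ≤ p₁ x)
    (hP₀ : IsProbabilityMeasure (ν.withDensity fun x => ENNReal.ofReal (p₀ x)))
    (hP₁ : IsProbabilityMeasure (ν.withDensity fun x => ENNReal.ofReal (p₁ x))) :
    (∀ (E : Set α), MeasurableSet E → ∀ p : ℝ,
      p ≤ ((ν.withDensity fun x => ENNReal.ofReal (p₀ x)) E).toReal →
      p - (1 / 2) * ∫ x, |p₀ x - p₁ x| ∂ν
        ≤ ((ν.withDensity fun x => ENNReal.ofReal (min (p₀ x) (p₁ x))) E).toReal) ∧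
    (∀ (ψ T₀ T₁ : α → ℝ), Measurable ψ → Measurable T₀ → Measurable T₁ →
      (∫⁻ x, ENNReal.ofReal |T₁ x - T₀ x|
          ∂(ν.withDensity fun x => ENNReal.ofReal (min (p₀ x) (p₁ x)))) / 2
        ≤ max (∫⁻ x, ENNReal.ofReal |ψ x - T₀ x|
                ∂(ν.withDensity fun x => ENNReal.ofReal (p₀ x)))
              (∫⁻ x, ENNReal.ofReal |ψ x - T₁ x|
                ∂(ν.withDensity fun x => ENNReal.ofReal (p₁ x)))) := by
  have hminm : Measurable fun x => min (p₀ x) (p₁ x) := hp₀m.min hp₁m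
  have hmin0 : ∀ x, 0 ≤ min (p₀ x) (p₁ x) := fun x => le_min (hp₀0 x) (hp₁0 x)
  -- lintegrals of densities equal 1
  have hL0 : ∫⁻ x, ENNReal.ofReal (p₀ x) ∂ν = 1 := by
    have := hP₀.measure_univ
    rwa [withDensity_apply _ MeasurableSet.univ, setLIntegral_univ] at this
  have hL1 : ∫⁻ x, ENNReal.ofReal (p₁ x) ∂ν = 1 := by
    have := hP₁.measure_univ
    rwa [withDensity_apply _ MeasurableSet.univ, setLIntegral_univ] at this
  -- integrability
  have hint : ∀ (f : α → ℝ), Measurable f → (∀ x, 0 ≤ f x) →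
      (∫⁻ x, ENNReal.ofReal (f x) ∂ν) ≠ ⊤ → Integrable f ν := by
    intro f hm h0 hfin
    refine ⟨hm.aestronglyMeasurable, ?_⟩
    have heq : (∫⁻ x, ‖f x‖ₑ ∂ν) = ∫⁻ x, ENNReal.ofReal (f x) ∂ν :=
      lintegral_congr fun x => Real.enorm_eq_ofReal (h0 x)
    simp only [HasFiniteIntegral, heq]
    exact lt_top_iff_ne_top.mpr hfin
  have hi0 : Integrable p₀ ν := hint p₀ hp₀m hp₀0 (by simp [hL0])
  have hi1 : Integrable p₁ ν := hint p₁ hp₁m hp₁0 (by simp [hL1])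
  have himin : Integrable (fun x => min (p₀ x) (p₁ x)) ν := by
    refine hi0.mono hminm.aestronglyMeasurable (Filter.Eventually.of_forall fun x => ?_)
    simp only [Real.norm_eq_abs, abs_of_nonneg (hmin0 x), abs_of_nonneg (hp₀0 x)]
    exact min_le_left _ _
  -- real integrals of densities
  have hI0 : ∫ x, p₀ x ∂ν = 1 := by
    rw [integral_eq_lintegral_of_nonneg_ae (Filter.Eventually.of_forall hp₀0)
      hp₀m.aestronglyMeasurable, hL0]; simp
  have hI1 : ∫ x, p₁ x ∂ν = 1 := by
    rw [integral_eq_lintegral_of_nonneg_ae (Filter.Eventually.of_forall hp₁0)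
      hp₁m.aestronglyMeasurable, hL1]; simp
  -- pointwise: |p₀ - p₁| = p₀ + p₁ - 2 * min
  have habs : ∀ x, |p₀ x - p₁ x| = p₀ x + p₁ x - 2 * min (p₀ x) (p₁ x) := by
    intro x
    rcases le_total (p₀ x) (p₁ x) with h | h
    · rw [abs_of_nonpos (by linarith), min_eq_left h]; ring
    · rw [abs_of_nonneg (by linarith), min_eq_right h]; ring
  have hTV : (1 / 2 : ℝ) * ∫ x, |p₀ x - p₁ x| ∂ν = 1 - ∫ x, min (p₀ x) (p₁ x) ∂ν := by
    have : ∫ x, |p₀ x - p₁ x| ∂ν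
        = ∫ x, (p₀ x + p₁ x - 2 * min (p₀ x) (p₁ x)) ∂ν := by
      exact integral_congr_ae (Filter.Eventually.of_forall fun x => habs x)
    have hadd : Integrable (fun x => p₀ x + p₁ x) ν := hi0.add hi1
    have hcm : Integrable (fun x => 2 * min (p₀ x) (p₁ x)) ν := himin.const_mul 2
    rw [this, integral_sub hadd hcm, integral_add hi0 hi1,
      integral_const_mul, hI0, hI1]
    ring
  constructor
  · -- part (a)
    intro E hE p hp
    -- express measures as set integrals
    have hsetconv : ∀ (f : α → ℝ), Measurable f → (∀ x, 0 ≤ f x) → Integrable f ν →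
        ((ν.withDensity fun x => ENNReal.ofReal (f x)) E).toReal = ∫ x in E, f x ∂ν := by
      intro f hm h0 hi
      rw [withDensity_apply _ hE,
        integral_eq_lintegral_of_nonneg_ae (Filter.Eventually.of_forall h0)
          hm.aestronglyMeasurable]
    rw [hsetconv _ hminm hmin0 himin]
    rw [hsetconv _ hp₀m hp₀0 hi0] at hp
    rw [hTV]
    -- key: ∫_E (p₀ - min) ≤ ∫ (p₀ - min) = 1 - ∫ min
    have hkey : ∫ x in E, p₀ x ∂ν - ∫ x in E, min (p₀ x) (p₁ x) ∂ν
        ≤ 1 - ∫ x, min (p₀ x) (p₁ x) ∂ν := by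
      have h1 : ∫ x in E, p₀ x ∂ν - ∫ x in E, min (p₀ x) (p₁ x) ∂ν
          = ∫ x in E, (p₀ x - min (p₀ x) (p₁ x)) ∂ν := by
        rw [integral_sub hi0.integrableOn himin.integrableOn]
      have h2 : ∫ x, (p₀ x - min (p₀ x) (p₁ x)) ∂ν = 1 - ∫ x, min (p₀ x) (p₁ x) ∂ν := by
        rw [integral_sub hi0 himin, hI0]
      rw [h1, ← h2]
      exact setIntegral_le_integral (hi0.sub himin)
        (Filter.Eventually.of_forall fun x => sub_nonneg.mpr (min_le_left _ _))
    linarith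
  · -- part (b)
    intro ψ T₀ T₁ hψ hT₀ hT₁
    have hrw : ∀ (f g : α → ℝ), Measurable f → Measurable g →
        ∫⁻ x, ENNReal.ofReal (g x) ∂(ν.withDensity fun x => ENNReal.ofReal (f x))
          = ∫⁻ x, ENNReal.ofReal (f x) * ENNReal.ofReal (g x) ∂ν := by
      intro f g hf hg
      rw [lintegral_withDensity_eq_lintegral_mul ν (by fun_prop) (by fun_prop)]
      rfl
    rw [hrw _ _ hminm (by fun_prop), hrw _ _ hp₀m (by fun_prop), hrw _ _ hp₁m (by fun_prop)]
    rw [ENNReal.div_le_iff_le_mul (Or.inl two_ne_zero) (Or.inl (by simp))]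
    set A := ∫⁻ x, ENNReal.ofReal (p₀ x) * ENNReal.ofReal |ψ x - T₀ x| ∂ν with hA
    set B := ∫⁻ x, ENNReal.ofReal (p₁ x) * ENNReal.ofReal |ψ x - T₁ x| ∂ν with hB
    calc ∫⁻ x, ENNReal.ofReal (min (p₀ x) (p₁ x)) * ENNReal.ofReal |T₁ x - T₀ x| ∂ν
        ≤ ∫⁻ x, ENNReal.ofReal (p₀ x) * ENNReal.ofReal |ψ x - T₀ x|
            + ENNReal.ofReal (p₁ x) * ENNReal.ofReal |ψ x - T₁ x| ∂ν := by
          refine lintegral_mono fun x => ?_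
          have htri : |T₁ x - T₀ x| ≤ |ψ x - T₀ x| + |ψ x - T₁ x| := by
            have := abs_sub (ψ x - T₀ x) (ψ x - T₁ x)
            calc |T₁ x - T₀ x| = |(ψ x - T₀ x) - (ψ x - T₁ x)| := by ring_nf
              _ ≤ |ψ x - T₀ x| + |ψ x - T₁ x| := abs_sub _ _
          calc ENNReal.ofReal (min (p₀ x) (p₁ x)) * ENNReal.ofReal |T₁ x - T₀ x|
              ≤ ENNReal.ofReal (min (p₀ x) (p₁ x)) *
                  (ENNReal.ofReal |ψ x - T₀ x| + ENNReal.ofReal |ψ x - T₁ x|) := by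
                gcongr
                rw [← ENNReal.ofReal_add (abs_nonneg _) (abs_nonneg _)]
                exact ENNReal.ofReal_le_ofReal htri
            _ = ENNReal.ofReal (min (p₀ x) (p₁ x)) * ENNReal.ofReal |ψ x - T₀ x|
                + ENNReal.ofReal (min (p₀ x) (p₁ x)) * ENNReal.ofReal |ψ x - T₁ x| := by
                ring
            _ ≤ ENNReal.ofReal (p₀ x) * ENNReal.ofReal |ψ x - T₀ x|
                + ENNReal.ofReal (p₁ x) * ENNReal.ofReal |ψ x - T₁ x| := by
                gcongr
                exacts [min_le_left _ _, min_le_right _ _]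
      _ = A + B := lintegral_add_left (by fun_prop) _
      _ ≤ max A B + max A B := add_le_add (le_max_left _ _) (le_max_right _ _)
      _ = max A B * 2 := by ring
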